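/- For every λ-term M, for every Φ-term t such that ⟨M⟩ rewrites to t in finitely many Φ-steps, and for every occurrence of a constructor c_{x,N} in t, the λ-term N is a subterm of M. -/

import Mathlib

/-- Untyped λ-terms over variables drawn from ℕ (a denumerable totally ordered set). -/
inductive Lam : Type
  | var : ℕ → Lam
  | lam : ℕ → Lam → Lam
  | app : Lam → Lam → Lam
deriving DecidableEq, Repr

namespace Lam

/-- Capture-permitting substitution M{N/x} (adequate for weak reduction of closed terms). -/
def subst : Lam → ℕ → Lam → Lam
  | var y, x, N => if y = x then N else var y
  | lam y M, x, N => if y = x then lam y M else lam y (subst M x N)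
  | app M₁ M₂, x, N => app (subst M₁ x N) (subst M₂ x N)

/-- Simultaneous substitution along a partial assignment of terms to variables. -/
def msubst : Lam → (ℕ → Option Lam) → Lam
  | var y, σ => (σ y).getD (var y)
  | lam y M, σ => lam y (msubst M (fun z => if z = y then none else σ z))
  | app M₁ M₂, σ => app (msubst M₁ σ) (msubst M₂ σ)

/-- The assignment sending each `xᵢ` to `tᵢ` (first match wins). -/
def substOf (xs : List ℕ) (ts : List Lam) : ℕ → Option Lam :=
  fun y => (xs.zip ts).lookup y

/-- Values: variables and abstractions. -/
def IsValue : Lam → Prop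
  | var _ => True
  | lam _ _ => True
  | app _ _ => False

/-- Weak call-by-value reduction. -/
inductive CbvStep : Lam → Lam → Prop
  | beta {x : ℕ} {M V : Lam} : IsValue V → CbvStep (app (lam x M) V) (subst M x V)
  | appL {M N L : Lam} : CbvStep M N → CbvStep (app M L) (app N L)
  | appR {M N L : Lam} : CbvStep M N → CbvStep (app L M) (app L N)

/-- A →v-normal form. -/
def CbvNormal (M : Lam) : Prop := ¬ ∃ N, CbvStep M N

/-- Free variables, as a finite set. -/
def fv : Lam → Finset ℕ
  | var x => {x}
  | lam x M => fv M \ {x}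
  | app M N => fv M ∪ fv N

/-- The sequence (without repetitions, in variable order) of free variables of `M`. -/
def fvList (M : Lam) : List ℕ := (fv M).sort (· ≤ ·)

def Closed (M : Lam) : Prop := fv M = ∅

/-- The size |M| of a λ-term. -/
def size : Lam → ℕ
  | var _ => 1
  | lam _ M => size M + 1
  | app M N => size M + size N + 1

end Lam

/-- `NSteps r n a b`: `a` reduces to `b` in exactly `n` `r`-steps. -/
def NSteps {α : Type*} (r : α → α → Prop) : ℕ → α → α → Prop
  | 0 => fun a b => a = b
  | n + 1 => fun a c => ∃ b, r a b ∧ NSteps r n b c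

/-- Terms of the constructor rewrite system Φ: variables, the binary function symbol
`app`, and for every λ-term `M` and variable `x` a constructor `c_{x,M}` (here `con x M`),
whose arity is the length of `FV(λx.M)`. -/
inductive PTerm : Type
  | var : ℕ → PTerm
  | app : PTerm → PTerm → PTerm
  | con : ℕ → Lam → List PTerm → PTerm

namespace PTerm

/-- Well-formed Φ-terms: every constructor is applied to as many arguments as its arity. -/
inductive WF : PTerm → Prop
  | var {x} : WF (var x)
  | app {u v} : WF u → WF v → WF (app u v)
  | con {x M ts} : ts.length = (Lam.fvList (Lam.lam x M)).length →
      (∀ t ∈ ts, WF t) → WF (con x M ts)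

/-- Constructor terms: built only from constructors. -/
inductive IsConTerm : PTerm → Prop
  | con {x M ts} : (∀ t ∈ ts, IsConTerm t) → IsConTerm (con x M ts)

/-- Canonical closed Φ-terms. -/
inductive Canonical : PTerm → Prop
  | con {t} : IsConTerm t → Canonical t
  | app {u v} : Canonical u → Canonical v → Canonical (app u v)

/-- Closed Φ-terms contain no variables. -/
inductive ClosedP : PTerm → Prop
  | app {u v} : ClosedP u → ClosedP v → ClosedP (app u v)
  | con {x M ts} : (∀ t ∈ ts, ClosedP t) → ClosedP (con x M ts)

/-- Substitution of Φ-terms for variables. -/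
def psubst (σ : ℕ → Option PTerm) : PTerm → PTerm
  | var y => (σ y).getD (var y)
  | app u v => app (psubst σ u) (psubst σ v)
  | con x M ts => con x M (ts.attach.map (fun t => psubst σ t.1))
decreasing_by
  all_goals simp_wf
  all_goals try have := List.sizeOf_lt_of_mem t.2
  all_goals omega

/-- The assignment sending each `xᵢ` to `tᵢ`. -/
def substOfP (xs : List ℕ) (ts : List PTerm) : ℕ → Option PTerm :=
  fun y => (xs.zip ts).lookup y

/-- Variables occurring in a Φ-term. -/
def pvars : PTerm → List ℕ
  | var y => [y]
  | app u v => pvars u ++ pvars v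
  | con _ _ ts => ts.attach.flatMap (fun t => pvars t.1)
decreasing_by
  all_goals simp_wf
  all_goals try have := List.sizeOf_lt_of_mem t.2
  all_goals omega

end PTerm

/-- The translation ⟨·⟩ from λ-terms to Φ-terms. -/
def transPhi : Lam → PTerm
  | .var x => .var x
  | .lam x M => .con x M ((Lam.fvList (.lam x M)).map .var)
  | .app M N => .app (transPhi M) (transPhi N)

/-- The readback ⟦·⟧ from Φ-terms to λ-terms. -/
def readback : PTerm → Lam
  | .var x => .var x
  | .app u v => .app (readback u) (readback v)
  | .con x M ts =>
      Lam.msubst (.lam x M)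
        (Lam.substOf (Lam.fvList (.lam x M)) (ts.attach.map (fun t => readback t.1)))
decreasing_by
  all_goals simp_wf
  all_goals try have := List.sizeOf_lt_of_mem t.2
  all_goals omega

/-- One-step rewriting in Φ: the rule app(c_{x,M}(x₁,…,xₙ), x) → ⟨M⟩ (matched variables
instantiated by constructor terms), closed under arbitrary contexts. -/
inductive PhiStep : PTerm → PTerm → Prop
  | root {x : ℕ} {M : Lam} {ts : List PTerm} {v : PTerm} :
      (∀ t ∈ ts, PTerm.IsConTerm t) → PTerm.IsConTerm v →
      ts.length = (Lam.fvList (.lam x M)).length →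
      PhiStep (.app (.con x M ts) v)
        (PTerm.psubst (PTerm.substOfP (Lam.fvList (.lam x M) ++ [x]) (ts ++ [v])) (transPhi M))
  | appL {u u' v} : PhiStep u u' → PhiStep (.app u v) (.app u' v)
  | appR {u v v'} : PhiStep v v' → PhiStep (.app u v) (.app u v')
  | conArg {x M ts₁ t t' ts₂} : PhiStep t t' →
      PhiStep (.con x M (ts₁ ++ t :: ts₂)) (.con x M (ts₁ ++ t' :: ts₂))

/-- Φ-normal forms. -/
def PhiNormal (t : PTerm) : Prop := ¬ ∃ u, PhiStep t u

/-- `Subterm N M`: N is a subterm of M. -/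
inductive Subterm : Lam → Lam → Prop
  | refl (M) : Subterm M M
  | lam {M x N} : Subterm M N → Subterm M (Lam.lam x N)
  | appL {M N L} : Subterm M N → Subterm M (Lam.app N L)
  | appR {M N L} : Subterm M N → Subterm M (Lam.app L N)

/-- `ConOccurs x N t`: the constructor c_{x,N} occurs in the Φ-term t. -/
inductive ConOccurs (x : ℕ) (N : Lam) : PTerm → Prop
  | here {ts} : ConOccurs x N (PTerm.con x N ts)
  | appL {u v} : ConOccurs x N u → ConOccurs x N (PTerm.app u v)
  | appR {u v} : ConOccurs x N v → ConOccurs x N (PTerm.app u v)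
  | conArg {y M ts t} : t ∈ ts → ConOccurs x N t → ConOccurs x N (PTerm.con y M ts)

lemma Subterm.trans : ∀ {A B C : Lam}, Subterm A B → Subterm B C → Subterm A C := by
  intro A B C h1 h2
  induction h2 generalizing A with
  | refl => exact h1
  | lam _ ih => exact Subterm.lam (ih h1)
  | appL _ ih => exact Subterm.appL (ih h1)
  | appR _ ih => exact Subterm.appR (ih h1)

lemma occ_trans {x : ℕ} {N : Lam} :
    ∀ P : Lam, ConOccurs x N (transPhi P) → Subterm N P := by
  intro P
  induction P with
  | var y => intro h; simp [transPhi] at h; cases h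
  | lam y Q ih =>
    intro h
    cases h with
    | here => exact Subterm.lam (Subterm.refl _)
    | conArg hm ho =>
      simp only [List.mem_map] at hm
      obtain ⟨z, _, rfl⟩ := hm
      cases ho
  | app P Q ihP ihQ =>
    intro h
    cases h with
    | appL h => exact Subterm.appL (ihP h)
    | appR h => exact Subterm.appR (ihQ h)

lemma lookup_mem_snd {l : List (ℕ × PTerm)} {y : ℕ} {u : PTerm}
    (h : l.lookup y = some u) : (y, u) ∈ l := by
  induction l with
  | nil => simp [List.lookup] at h
  | cons a l ih =>
    rw [List.lookup] at h
    by_cases hy : y = a.1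
    · simp [hy] at h
      subst h
      subst hy
      simp
    · have : (y == a.1) = false := by simp [hy]
      rw [this] at h
      exact List.mem_cons_of_mem _ (ih h)

lemma substOfP_mem {xs : List ℕ} {ts : List PTerm} {y : ℕ} {u : PTerm}
    (h : PTerm.substOfP xs ts y = some u) : u ∈ ts := by
  have := lookup_mem_snd h
  exact (List.of_mem_zip this).2

lemma occ_psubst {x : ℕ} {N : Lam} (σ : ℕ → Option PTerm) :
    ∀ s : PTerm, ConOccurs x N (PTerm.psubst σ s) →
      ConOccurs x N s ∨ ∃ y u, σ y = some u ∧ ConOccurs x N u := by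
  intro s
  induction s using PTerm.psubst.induct with
  | case1 y =>
    intro h
    rw [PTerm.psubst] at h
    cases hy : σ y with
    | none => rw [hy] at h; simp at h; cases h
    | some u => rw [hy] at h; exact Or.inr ⟨y, u, hy, by simpa using h⟩
  | case2 u v ihu ihv =>
    intro h
    rw [PTerm.psubst] at h
    cases h with
    | appL h =>
      rcases ihu h with h' | h'
      · exact Or.inl (ConOccurs.appL h')
      · exact Or.inr h'
    | appR h =>
      rcases ihv h with h' | h'
      · exact Or.inl (ConOccurs.appR h')
      · exact Or.inr h'
  | case3 z M ts ih =>
    intro h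
    rw [PTerm.psubst] at h
    cases h with
    | here => exact Or.inl ConOccurs.here
    | conArg hm ho =>
      simp only [List.mem_map, List.mem_attach, true_and, Subtype.exists] at hm
      obtain ⟨t, ht, rfl⟩ := hm
      rcases ih ⟨t, ht⟩ ho with h' | h'
      · exact Or.inl (ConOccurs.conArg ht h')
      · exact Or.inr h'

lemma good_step (M : Lam) {t u : PTerm} (h : PhiStep t u)
    (hg : ∀ x N, ConOccurs x N t → Subterm N M) :
    ∀ x N, ConOccurs x N u → Subterm N M := by
  induction h with
  | @root x₀ M₀ ts v hts hv hlen =>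
    intro x N hocc
    rcases occ_psubst _ _ hocc with h1 | ⟨y, w, hy, hw⟩
    · exact Subterm.trans (occ_trans M₀ h1) (hg _ _ (ConOccurs.appL ConOccurs.here))
    · have hmem := substOfP_mem hy
      rcases List.mem_append.1 hmem with hm | hm
      · exact hg _ _ (ConOccurs.appL (ConOccurs.conArg hm hw))
      · simp at hm
        subst hm
        exact hg _ _ (ConOccurs.appR hw)
  | @appL u u' v _ ih =>
    intro x N hocc
    cases hocc with
    | appL h' => exact ih (fun x N h => hg x N (ConOccurs.appL h)) x N h'
    | appR h' => exact hg _ _ (ConOccurs.appR h')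
  | @appR u v v' _ ih =>
    intro x N hocc
    cases hocc with
    | appL h' => exact hg _ _ (ConOccurs.appL h')
    | appR h' => exact ih (fun x N h => hg x N (ConOccurs.appR h)) x N h'
  | @conArg z Mz ts₁ t t' ts₂ _ ih =>
    intro x N hocc
    cases hocc with
    | here => exact hg _ _ ConOccurs.here
    | conArg hm ho =>
      rcases List.mem_append.1 hm with hm1 | hm2
      · exact hg _ _ (ConOccurs.conArg (List.mem_append.2 (Or.inl hm1)) ho)
      · rcases List.mem_cons.1 hm2 with rfl | hm3
        · exact ih (fun x N h => hg x N (ConOccurs.conArg (List.mem_append.2 (Or.inr List.mem_cons_self)) h)) x N ho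
        · exact hg _ _ (ConOccurs.conArg (List.mem_append.2 (Or.inr (List.mem_cons_of_mem _ hm3))) ho)

/-- For every λ-term M, every Φ-term t reachable from ⟨M⟩ by finitely many Φ-steps,
and every occurrence of a constructor c_{x,N} in t, N is a subterm of M. -/
theorem constructors_are_subterms (M : Lam) (t : PTerm)
    (h : Relation.ReflTransGen PhiStep (transPhi M) t)
    (x : ℕ) (N : Lam) (hocc : ConOccurs x N t) :
    Subterm N M := by
  have key : ∀ x' N', ConOccurs x' N' t → Subterm N' M := by
    clear hocc
    induction h with
    | refl => exact fun _ _ => occ_trans M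
    | tail _ hstep ih => exact good_step M hstep ih
  exact key x N hocc
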